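/- For a delivery point d=(x,y) within the reachable band (|y| ≤ (R/(2v))√(v²−1)), setting x' = (R/2)·√(1 − y²v²/((R/2)²(v²−1))), the earliest feasible departure position is es(d) = x − R/(2v) − x' and the latest feasible departure position is ls(d) = x − R/(2v) + x'; i.e., there exists a feasible delivery trip to d starting at (s,0) if and only if es(d) ≤ s ≤ ls(d). -/

import Mathlib

/-- Euclidean distance between two points of the plane (as pairs of reals). -/
noncomputable def dist2 (p q : ℝ × ℝ) : ℝ :=
  Real.sqrt ((p.1 - q.1) ^ 2 + (p.2 - q.2) ^ 2)

lemma sqrt_tri (a b y : ℝ) : Real.sqrt (a^2+y^2) ≤ Real.sqrt (b^2+y^2) + |a-b| := by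
  have hb : |b| ≤ Real.sqrt (b^2+y^2) := by
    rw [← Real.sqrt_sq_eq_abs]
    exact Real.sqrt_le_sqrt (by nlinarith [sq_nonneg y])
  have h0 : (0:ℝ) ≤ Real.sqrt (b^2+y^2) + |a-b| := by positivity
  have : a^2+y^2 ≤ (Real.sqrt (b^2+y^2) + |a-b|)^2 := by
    have hsq : (Real.sqrt (b^2+y^2))^2 = b^2+y^2 := Real.sq_sqrt (by positivity)
    nlinarith [abs_nonneg (a-b), le_abs_self ((a-b)*b), abs_mul (a-b) b,
      mul_le_mul_of_nonneg_left hb (abs_nonneg (a-b)), sq_abs (a-b)]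
  calc Real.sqrt (a^2+y^2) ≤ Real.sqrt ((Real.sqrt (b^2+y^2) + |a-b|)^2) := Real.sqrt_le_sqrt this
    _ = _ := Real.sqrt_sq h0

lemma focal (M c u y : ℝ) (hM : 0 < M) (hc2 : c^2 < M^2)
    (hE : u^2*(M^2-c^2) + M^2*y^2 ≤ M^2*(M^2-c^2)) :
    Real.sqrt ((u+c)^2+y^2) ≤ M + c*u/M := by
  have hu2 : u^2 ≤ M^2 := by nlinarith [sq_nonneg y, sq_nonneg M]
  have h0 : 0 ≤ M + c*u/M := by
    have : 0 ≤ (M^2 + c*u)/M := by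
      apply div_nonneg _ hM.le
      nlinarith [sq_nonneg (M+u), sq_nonneg (M-u), sq_nonneg (c+M), sq_nonneg (c-M), abs_nonneg c]
    calc (0:ℝ) ≤ (M^2 + c*u)/M := this
      _ = M + c*u/M := by field_simp
  have hle : (u+c)^2+y^2 ≤ (M + c*u/M)^2 := by
    have : (M + c*u/M)^2 = (M^2+c*u)^2/M^2 := by field_simp
    rw [this, le_div_iff₀ (by positivity)]
    nlinarith []
  calc Real.sqrt ((u+c)^2+y^2) ≤ Real.sqrt ((M + c*u/M)^2) := Real.sqrt_le_sqrt hle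
    _ = M + c*u/M := Real.sqrt_sq h0

lemma ellipse_iff (M c u y : ℝ) (hM : 0 < M) (hc2 : c^2 < M^2) :
    Real.sqrt ((u+c)^2+y^2) + Real.sqrt ((u-c)^2+y^2) ≤ 2*M ↔
    u^2*(M^2-c^2) + M^2*y^2 ≤ M^2*(M^2-c^2) := by
  set A := Real.sqrt ((u+c)^2+y^2) with hA
  set B := Real.sqrt ((u-c)^2+y^2) with hB
  have hA0 : 0 ≤ A := Real.sqrt_nonneg _
  have hB0 : 0 ≤ B := Real.sqrt_nonneg _
  have hA2 : A^2 = (u+c)^2+y^2 := Real.sq_sqrt (by positivity)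
  have hB2 : B^2 = (u-c)^2+y^2 := Real.sq_sqrt (by positivity)
  constructor
  · intro h
    have hAB : A*B ≤ 2*M^2 - (u^2+c^2+y^2) := by nlinarith [sq_nonneg (A-B)]
    have hAB0 : 0 ≤ A*B := mul_nonneg hA0 hB0
    have hsq : (A*B)^2 ≤ (2*M^2 - (u^2+c^2+y^2))^2 := by nlinarith
    have hprod : (A*B)^2 = (u^2+c^2+y^2)^2 - 4*u^2*c^2 := by
      have : (A*B)^2 = A^2 * B^2 := by ring
      rw [this, hA2, hB2]; ring
    nlinarith [sq_nonneg M]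
  · intro hE
    have h1 : A ≤ M + c*u/M := focal M c u y hM hc2 hE
    have h2 : B ≤ M - c*u/M := by
      have hE' : (-u)^2*(M^2-c^2) + M^2*y^2 ≤ M^2*(M^2-c^2) := by nlinarith
      have := focal M c (-u) y hM hc2 hE'
      have he : (-u+c)^2 = (u-c)^2 := by ring
      rw [he] at this
      calc B ≤ M + c*(-u)/M := this
        _ = M - c*u/M := by ring
    linarith

-- Step 1: existence of a feasible trip iff inside the ellipse with foci (s,0), (s+R/v,0)
lemma exists_trip_iff (v R s x y : ℝ) (hv : 1 < v) (hR : 0 < R) (hy : y ≠ 0) :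
    (∃ r : ℝ, s < r ∧
        dist2 (x, y) (s, 0) + dist2 ((r : ℝ), 0) (x, y) = v * (r - s) ∧
        v * (r - s) ≤ R) ↔
    Real.sqrt ((x-s)^2+y^2) + Real.sqrt ((x-s-R/v)^2+y^2) ≤ R := by
  have hv0 : (0:ℝ) < v := by linarith
  have hd1 : dist2 (x, y) (s, 0) = Real.sqrt ((x-s)^2+y^2) := by
    unfold dist2; simp
  have hd2 : ∀ r : ℝ, dist2 ((r:ℝ), 0) (x, y) = Real.sqrt ((x-r)^2+y^2) := by
    intro r; unfold dist2; simp; congr 1; ring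
  set A := Real.sqrt ((x-s)^2+y^2) with hAdef
  have hA0 : 0 < A := Real.sqrt_pos.mpr (by positivity)
  constructor
  · rintro ⟨r, hsr, heq, hle⟩
    rw [hd1, hd2] at heq
    have hq : v * (R/v) = R := by field_simp
    have hrle : r ≤ s + R/v := by nlinarith [hle, hq]
    have htri : Real.sqrt ((x-s-R/v)^2+y^2) ≤ Real.sqrt ((x-r)^2+y^2) + |x-s-R/v - (x-r)| :=
      sqrt_tri _ _ _
    have habs : |x-s-R/v - (x-r)| = s + R/v - r := by
      rw [abs_of_nonpos (by linarith)]; ring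
    nlinarith [htri, habs, heq, hA0, hq,
      mul_nonneg (by linarith : (0:ℝ) ≤ v - 1) (by linarith : (0:ℝ) ≤ s + R/v - r)]
  · intro h
    set g : ℝ → ℝ := fun r => A + Real.sqrt ((x-r)^2+y^2) - v*(r-s) with hg
    have hcont : Continuous g := by
      apply Continuous.sub
      · exact continuous_const.add ((Real.continuous_sqrt).comp (by continuity))
      · continuity
    have hgs : g s = 2*A := by simp [hg, hAdef]; ring
    have hgb : g (s + R/v) = A + Real.sqrt ((x-s-R/v)^2+y^2) - R := by
      simp only [hg]
      have : x - (s + R/v) = x - s - R/v := by ring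
      rw [this]
      have : v * (s + R/v - s) = R := by field_simp; ring
      rw [this]
    have hab : s ≤ s + R/v := by linarith [div_pos hR hv0]
    have hmem : (0:ℝ) ∈ Set.Icc (g (s + R/v)) (g s) := by
      constructor
      · rw [hgb]; linarith
      · rw [hgs]; linarith
    obtain ⟨r, hrIcc, hgr⟩ := intermediate_value_Icc' hab hcont.continuousOn hmem
    have hgr0 : A + Real.sqrt ((x-r)^2+y^2) = v*(r-s) := by
      have := hgr
      simp only [hg] at this
      linarith
    have hsr : s < r := by
      rcases lt_or_eq_of_le hrIcc.1 with h' | h'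
      · exact h'
      · exfalso
        rw [← h'] at hgr
        rw [hgs] at hgr
        linarith
    refine ⟨r, hsr, ?_, ?_⟩
    · rw [hd1, hd2]; linarith [hgr0]
    · have hq : v * (R/v) = R := by field_simp
      nlinarith [hrIcc.2, hq]

/-- For a delivery point `d = (x,y)` inside the reachable band
(`|y| ≤ m := (R/(2v))√(v²-1)`), with `x' = (R/2)·√(1 - y²v²/((R/2)²(v²-1)))`,
the feasible departure positions `s` for a delivery trip to `d` are exactly those with
`es(d) = x - R/(2v) - x' ≤ s ≤ x - R/(2v) + x' = ls(d)`. -/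
theorem feasible_start_interval (v R s x y : ℝ) (hv : 1 < v) (hR : 0 < R)
    (hy : y ≠ 0)
    (hband : |y| ≤ R / (2 * v) * Real.sqrt (v ^ 2 - 1)) :
    (∃ r : ℝ, s < r ∧
        dist2 (x, y) (s, 0) + dist2 ((r : ℝ), 0) (x, y) = v * (r - s) ∧
        v * (r - s) ≤ R) ↔
      (x - R / (2 * v) - (R / 2) * Real.sqrt (1 - y ^ 2 * v ^ 2 / ((R / 2) ^ 2 * (v ^ 2 - 1))) ≤ s ∧
        s ≤ x - R / (2 * v) + (R / 2) * Real.sqrt (1 - y ^ 2 * v ^ 2 / ((R / 2) ^ 2 * (v ^ 2 - 1)))) := by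
  have hv0 : (0:ℝ) < v := by linarith
  have hv0' : v ≠ 0 := ne_of_gt hv0
  have hv21 : (0:ℝ) < v^2 - 1 := by nlinarith
  set M : ℝ := R/2 with hMdef
  set c : ℝ := R/(2*v) with hcdef
  have hM : 0 < M := by positivity
  have hc : 0 < c := by positivity
  have hcM : c < M := by
    rw [hMdef, hcdef, div_lt_div_iff₀ (by positivity) (by positivity)]
    nlinarith
  have hc2 : c^2 < M^2 := by nlinarith
  -- band condition squared
  have hband2 : y^2 * v^2 ≤ M^2 * (v^2 - 1) := by
    have hsq : (R / (2*v) * Real.sqrt (v^2-1))^2 = (R/(2*v))^2 * (v^2-1) := by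
      rw [mul_pow, Real.sq_sqrt hv21.le]
    have h2 : y^2 ≤ (R/(2*v))^2 * (v^2-1) := by
      rw [← hsq, ← sq_abs y]
      exact pow_le_pow_left₀ (abs_nonneg y) hband 2
    rw [hMdef]
    have : (R/(2*v))^2 = (R/2)^2 / v^2 := by field_simp
    rw [this] at h2
    rw [div_mul_eq_mul_div, le_div_iff₀ (by positivity)] at h2
    linarith [h2]
  have harg : 0 ≤ 1 - y^2 * v^2 / ((R/2)^2 * (v^2-1)) := by
    rw [sub_nonneg, div_le_one (by positivity)]
    calc y^2*v^2 ≤ M^2 * (v^2-1) := hband2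
      _ = (R/2)^2 * (v^2-1) := by rw [hMdef]
  set E : ℝ := Real.sqrt (1 - y ^ 2 * v ^ 2 / ((R / 2) ^ 2 * (v ^ 2 - 1))) with hEdef
  have hE0 : 0 ≤ E := Real.sqrt_nonneg _
  have hE2 : E^2 = 1 - y^2 * v^2 / ((R/2)^2 * (v^2-1)) := Real.sq_sqrt harg
  set u : ℝ := x - s - c with hudef
  have hT2 : (M*E)^2 = M^2 - y^2*v^2/(v^2-1) := by
    rw [mul_pow, hE2, hMdef]
    field_simp
  have key : (Real.sqrt ((x-s)^2+y^2) + Real.sqrt ((x-s-R/v)^2+y^2) ≤ R) ↔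
      u^2 ≤ (M*E)^2 := by
    have e1 : x - s = u + c := by rw [hudef]; ring
    have e2 : x - s - R/v = u - c := by
      rw [hudef, hcdef]; field_simp; ring
    have e3 : R = 2*M := by rw [hMdef]; ring
    rw [e2, e1, e3, ellipse_iff M c u y hM hc2, hT2]
    have hcc : c^2 = M^2/v^2 := by
      rw [hcdef, hMdef]; field_simp
    have hpos : (0:ℝ) < M^2/v^2 := by positivity
    have iff1 : u^2*(M^2-c^2) + M^2*y^2 ≤ M^2*(M^2-c^2) ↔
        u^2*(v^2-1) + y^2*v^2 ≤ M^2*(v^2-1) := by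
      rw [show u^2*(M^2-c^2) + M^2*y^2 = (u^2*(v^2-1) + y^2*v^2) * (M^2/v^2) from by
            rw [hcc]; field_simp,
          show M^2*(M^2-c^2) = (M^2*(v^2-1)) * (M^2/v^2) from by
            rw [hcc]; field_simp,
          mul_le_mul_iff_of_pos_right hpos]
    have iff2 : u^2 ≤ M^2 - y^2*v^2/(v^2-1) ↔
        u^2*(v^2-1) + y^2*v^2 ≤ M^2*(v^2-1) := by
      rw [show M^2 - y^2*v^2/(v^2-1) = (M^2*(v^2-1) - y^2*v^2)/(v^2-1) from by
            field_simp,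
          le_div_iff₀ hv21]
      constructor <;> intro h <;> nlinarith [h]
    rw [iff1, ← iff2]
  rw [exists_trip_iff v R s x y hv hR hy, key]
  constructor
  · intro h
    have habs : |u| ≤ M*E := by
      rw [← Real.sqrt_sq_eq_abs, ← Real.sqrt_sq (by positivity : (0:ℝ) ≤ M*E)]
      exact Real.sqrt_le_sqrt h
    rw [abs_le] at habs
    exact ⟨by linarith [habs.2], by linarith [habs.1]⟩
  · rintro ⟨h1, h2⟩
    exact sq_le_sq' (by linarith) (by linarith)
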